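/- Fix an integer ℓ ≥ 2, and let A : ℝ² → Matrix (Fin 2) (Fin 2) ℝ be A(x₁,x₂) = !![x₁, x₂^ℓ; x₂^ℓ, x₁*x₂]. Suppose Φ : ℝ² → ℝ² is smooth on a neighborhood of 0 with Φ(0) = 0 and fderiv ℝ Φ 0 invertible, and X : ℝ² → Matrix (Fin 2) (Fin 2) ℝ is smooth on that neighborhood with X x invertible there, such that A(Φ x) = (X x)ᵀ * A x * (X x) for all x in the neighborhood. Then det (fderiv ℝ Φ 0) > 0, i.e., Φ preserves the orientation of ℝ². -/

import Mathlib

attribute [local instance] Matrix.normedAddCommGroup Matrix.normedSpace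

open scoped Matrix Topology

private lemma alg_aux (ℓ : ℕ) (hℓ : 2 ≤ ℓ) (t ε p q G : ℝ) (ht : t ≠ 0) (hε : ε ^ 2 = 1)
    (H : (t * p) ^ 2 * (t * q) - ((t * q) ^ ℓ) ^ 2
        = G ^ 2 * ((t * 1) ^ 2 * (t * ε) - ((t * ε) ^ ℓ) ^ 2)) :
    p ^ 2 * q - t ^ (2 * ℓ - 3) * q ^ (2 * ℓ) = G ^ 2 * (ε - t ^ (2 * ℓ - 3)) := by
  obtain ⟨k, hk⟩ : ∃ k, 2 * ℓ = k + 3 := ⟨2 * ℓ - 3, by omega⟩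
  have hk2 : 2 * ℓ - 3 = k := by omega
  have e1 : ((t * q) ^ ℓ) ^ 2 = t ^ (k + 3) * q ^ (k + 3) := by
    rw [← pow_mul, mul_comm ℓ 2, hk, mul_pow]
  have e2 : ((t * ε) ^ ℓ) ^ 2 = t ^ (k + 3) := by
    have hε2 : ε ^ (k + 3) = 1 := by rw [← hk, pow_mul, hε, one_pow]
    rw [← pow_mul, mul_comm ℓ 2, hk, mul_pow, hε2, mul_one]
  rw [e1, e2] at H
  rw [hk2, hk]
  apply mul_left_cancel₀ (pow_ne_zero 3 ht)
  ring_nf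
  ring_nf at H
  linarith [H]

/-- For `A(x₁,x₂) = !![x₁, x₂^ℓ; x₂^ℓ, x₁x₂]` (`ℓ ≥ 2`), any diffeomorphism-germ `Φ` at `0`
in the isotropy group `𝒟_A` (i.e. with `A ∘ Φ = Xᵀ A X` near `0` for an
invertible-matrix-valued `X`) preserves the orientation of `ℝ²`. -/
theorem isotropy_orientation_preserving_class9 (ℓ : ℕ) (hℓ : 2 ≤ ℓ)
    (A : ℝ × ℝ → Matrix (Fin 2) (Fin 2) ℝ)
    (hA : A = fun p => !![p.1, p.2 ^ ℓ; p.2 ^ ℓ, p.1 * p.2])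
    (Φ : ℝ × ℝ → ℝ × ℝ) (X : ℝ × ℝ → Matrix (Fin 2) (Fin 2) ℝ)
    (s : Set (ℝ × ℝ)) (hs : s ∈ nhds (0 : ℝ × ℝ))
    (hΦ : ContDiffOn ℝ (⊤ : ℕ∞) Φ s) (hΦ0 : Φ 0 = 0)
    (hdΦ : IsUnit (fderiv ℝ Φ 0))
    (hX : ContDiffOn ℝ (⊤ : ℕ∞) X s) (hXinv : ∀ x ∈ s, IsUnit (X x))
    (heq : ∀ x ∈ s, A (Φ x) = (X x)ᵀ * A x * X x) :
    0 < LinearMap.det ((fderiv ℝ Φ 0) : (ℝ × ℝ) →ₗ[ℝ] (ℝ × ℝ)) := by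
  classical
  set L := fderiv ℝ Φ 0 with hLdef
  -- differentiability of Φ at 0
  have hΦdiff : HasFDerivAt Φ L 0 :=
    (((hΦ.contDiffAt hs).differentiableAt (by simp))).hasFDerivAt
  -- continuity of the entries of X at 0
  have hXat : ContinuousAt X 0 := (hX.contDiffAt hs).continuousAt
  have hXij : ∀ i j : Fin 2, ContinuousAt (fun x => X x i j) 0 := by
    intro i j
    exact (((continuous_apply j).comp (continuous_apply i)).continuousAt).comp hXat
  -- curves t ↦ t • v tend to 0
  have hcurve : ∀ v : ℝ × ℝ,
      Filter.Tendsto (fun t : ℝ => t • v) (𝓝[≠] (0:ℝ)) (𝓝 (0 : ℝ × ℝ)) := by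
    intro v
    have hc : Continuous fun t : ℝ => t • v := continuous_id.smul continuous_const
    have := (hc.tendsto 0).mono_left (nhdsWithin_le_nhds (s := {(0:ℝ)}ᶜ))
    simpa using this
  have hmem : ∀ v : ℝ × ℝ, ∀ᶠ t : ℝ in 𝓝[≠] (0:ℝ), t • v ∈ s := fun v => (hcurve v) hs
  -- directional limits of Φ
  have key : ∀ v : ℝ × ℝ,
      Filter.Tendsto (fun t : ℝ => t⁻¹ • Φ (t • v)) (𝓝[≠] (0:ℝ)) (𝓝 (L v)) := by
    intro v
    have h1 : HasDerivAt (fun t : ℝ => t • v) v 0 := by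
      simpa using (hasDerivAt_id (0:ℝ)).smul_const v
    have h2 : HasDerivAt (fun t : ℝ => Φ (t • v)) (L v) 0 :=
      hΦdiff.comp_hasDerivAt_of_eq 0 h1 (by simp)
    have := hasDerivAt_iff_tendsto_slope.1 h2
    refine this.congr fun t => ?_
    simp [slope, hΦ0]
  have key1 : ∀ v : ℝ × ℝ,
      Filter.Tendsto (fun t : ℝ => t⁻¹ * (Φ (t • v)).1) (𝓝[≠] (0:ℝ)) (𝓝 (L v).1) := by
    intro v
    have := (continuous_fst.tendsto (L v)).comp (key v)
    simpa [Function.comp_def] using this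
  have key2 : ∀ v : ℝ × ℝ,
      Filter.Tendsto (fun t : ℝ => t⁻¹ * (Φ (t • v)).2) (𝓝[≠] (0:ℝ)) (𝓝 (L v).2) := by
    intro v
    have := (continuous_snd.tendsto (L v)).comp (key v)
    simpa [Function.comp_def] using this
  -- entry (0,0) identity
  have E1 : ∀ x ∈ s, (Φ x).1
      = x.1 * (X x 0 0) ^ 2 + 2 * x.2 ^ ℓ * (X x 0 0 * X x 1 0) + x.1 * x.2 * (X x 1 0) ^ 2 := by
    intro x hx
    have := congrFun (congrFun (heq x hx) 0) 0
    simp [hA, Matrix.mul_apply, Fin.sum_univ_two] at this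
    rw [this]; ring
  -- determinant identity
  have Edet : ∀ x ∈ s, (Φ x).1 ^ 2 * (Φ x).2 - ((Φ x).2 ^ ℓ) ^ 2
      = ((X x).det) ^ 2 * (x.1 ^ 2 * x.2 - (x.2 ^ ℓ) ^ 2) := by
    intro x hx
    have := congrArg Matrix.det (heq x hx)
    simp [hA, Matrix.det_mul, Matrix.det_fin_two_of] at this
    linear_combination this
  set g0 : ℝ := (X 0).det with hg0def
  have hg0 : g0 ≠ 0 := by
    have := (Matrix.isUnit_iff_isUnit_det _).mp (hXinv 0 (mem_of_mem_nhds hs))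
    exact this.ne_zero
  have hg0sq : 0 < g0 ^ 2 :=
    lt_of_le_of_ne (sq_nonneg g0) (Ne.symm (pow_ne_zero 2 hg0))
  -- continuity of det X along curves
  have hdetX : ∀ v : ℝ × ℝ,
      Filter.Tendsto (fun t : ℝ => (X (t • v)).det) (𝓝[≠] (0:ℝ)) (𝓝 g0) := by
    intro v
    have hc : ContinuousAt (fun x => (X x).det) 0 := by
      have : (fun x => (X x).det)
          = fun x => X x 0 0 * X x 1 1 - X x 0 1 * X x 1 0 := by
        funext x; rw [Matrix.det_fin_two]
      rw [this]
      exact ((hXij 0 0).mul (hXij 1 1)).sub ((hXij 0 1).mul (hXij 1 0))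
    exact hc.tendsto.comp (hcurve v)
  -- Step 1 : (L (0,1)).1 = 0
  have hb : (L (0, 1)).1 = 0 := by
    have hlim : Filter.Tendsto
        (fun t : ℝ => 2 * t ^ (ℓ - 1) * (X (t • ((0:ℝ),(1:ℝ))) 0 0 * X (t • ((0:ℝ),(1:ℝ))) 1 0))
        (𝓝[≠] (0:ℝ)) (𝓝 0) := by
      have h1 : Filter.Tendsto (fun t : ℝ => 2 * t ^ (ℓ - 1)) (𝓝[≠] (0:ℝ)) (𝓝 0) := by
        have := ((continuous_pow (ℓ - 1)).tendsto (0:ℝ)).mono_left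
          (nhdsWithin_le_nhds (s := {(0:ℝ)}ᶜ))
        rw [zero_pow (by omega : ℓ - 1 ≠ 0)] at this
        simpa using this.const_mul 2
      have h2 := (((hXij 0 0).tendsto.comp (hcurve (0,1))).mul
        ((hXij 1 0).tendsto.comp (hcurve (0,1))))
      simpa using h1.mul h2
    have heq' : ∀ᶠ t : ℝ in 𝓝[≠] (0:ℝ),
        t⁻¹ * (Φ (t • ((0:ℝ),(1:ℝ)))).1
          = 2 * t ^ (ℓ - 1) * (X (t • ((0:ℝ),(1:ℝ))) 0 0 * X (t • ((0:ℝ),(1:ℝ))) 1 0) := by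
      filter_upwards [hmem (0,1), self_mem_nhdsWithin] with t hts htne
      rw [E1 _ hts]
      have hsm1 : (t • ((0:ℝ),(1:ℝ))).1 = 0 := by simp
      have hsm2 : (t • ((0:ℝ),(1:ℝ))).2 = t := by simp
      rw [hsm1, hsm2]
      have htp : t ^ ℓ = t * t ^ (ℓ - 1) := by
        rw [← pow_succ']; congr 1; omega
      have htne' : (t:ℝ) ≠ 0 := by simpa using htne
      field_simp [htp]
      rw [htp]
      ring
    exact tendsto_nhds_unique (Filter.Tendsto.congr' heq' (key1 (0,1))) hlim
  -- Step 2 : the cubic relation for ε = ±1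
  have main : ∀ ε : ℝ, ε ^ 2 = 1 →
      (L (1, ε)).1 ^ 2 * (L (1, ε)).2 = g0 ^ 2 * ε := by
    intro ε hε
    set v : ℝ × ℝ := (1, ε) with hv
    have hpow0 : Filter.Tendsto (fun t : ℝ => t ^ (2 * ℓ - 3)) (𝓝[≠] (0:ℝ)) (𝓝 0) := by
      have := ((continuous_pow (2 * ℓ - 3)).tendsto (0:ℝ)).mono_left
        (nhdsWithin_le_nhds (s := {(0:ℝ)}ᶜ))
      rwa [zero_pow (by omega : 2 * ℓ - 3 ≠ 0)] at this
    -- limit of the left-hand side expression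
    have hlhs : Filter.Tendsto
        (fun t : ℝ => (t⁻¹ * (Φ (t • v)).1) ^ 2 * (t⁻¹ * (Φ (t • v)).2)
          - t ^ (2 * ℓ - 3) * (t⁻¹ * (Φ (t • v)).2) ^ (2 * ℓ))
        (𝓝[≠] (0:ℝ)) (𝓝 ((L v).1 ^ 2 * (L v).2)) := by
      have h1 := ((key1 v).pow 2).mul (key2 v)
      have h2 := hpow0.mul ((key2 v).pow (2 * ℓ))
      have := h1.sub h2
      simpa using this
    -- limit of the right-hand side expression
    have hrhs : Filter.Tendsto
        (fun t : ℝ => ((X (t • v)).det) ^ 2 * (ε - t ^ (2 * ℓ - 3)))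
        (𝓝[≠] (0:ℝ)) (𝓝 (g0 ^ 2 * ε)) := by
      have h1 := ((hdetX v).pow 2).mul ((tendsto_const_nhds (x := ε)).sub hpow0)
      simpa using h1
    -- the two expressions agree near 0
    have heq' : ∀ᶠ t : ℝ in 𝓝[≠] (0:ℝ),
        (t⁻¹ * (Φ (t • v)).1) ^ 2 * (t⁻¹ * (Φ (t • v)).2)
          - t ^ (2 * ℓ - 3) * (t⁻¹ * (Φ (t • v)).2) ^ (2 * ℓ)
        = ((X (t • v)).det) ^ 2 * (ε - t ^ (2 * ℓ - 3)) := by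
      filter_upwards [hmem v, self_mem_nhdsWithin] with t hts htne
      have htne' : (t:ℝ) ≠ 0 := by simpa using htne
      have hD := Edet _ hts
      have hsm1 : (t • v).1 = t * 1 := by simp [hv]
      have hsm2 : (t • v).2 = t * ε := by simp [hv]
      rw [hsm1, hsm2] at hD
      have hp : (Φ (t • v)).1 = t * (t⁻¹ * (Φ (t • v)).1) := by
        field_simp
      have hq : (Φ (t • v)).2 = t * (t⁻¹ * (Φ (t • v)).2) := by
        field_simp
      rw [hp, hq] at hD
      exact alg_aux ℓ hℓ t ε _ _ _ htne' hε hD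
    exact tendsto_nhds_unique (Filter.Tendsto.congr' heq' hlhs) hrhs
  have h1 := main 1 (by norm_num)
  have h2 := main (-1) (by norm_num)
  -- notation for the matrix entries of L
  set a : ℝ := (L (1, 0)).1 with ha
  set c : ℝ := (L (1, 0)).2 with hc
  set d : ℝ := (L (0, 1)).2 with hd
  have hL11 : L ((1:ℝ), (1:ℝ)) = L (1, 0) + L (0, 1) := by
    rw [← map_add]; norm_num
  have hL1m1 : L ((1:ℝ), (-1:ℝ)) = L (1, 0) - L (0, 1) := by
    rw [← map_sub]; norm_num
  rw [hL11] at h1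
  rw [hL1m1] at h2
  simp only [Prod.fst_add, Prod.snd_add, Prod.fst_sub, Prod.snd_sub, ← ha, ← hc, ← hd, hb] at h1 h2
  -- h1 : (a + 0)^2 * (c + d) = g0^2 * 1 ; h2 : (a - 0)^2 * (c - d) = g0^2 * -1
  have hkey : a ^ 2 * d = g0 ^ 2 := by nlinarith [h1, h2]
  -- determinant of L
  have hdet : LinearMap.det (L : (ℝ × ℝ) →ₗ[ℝ] (ℝ × ℝ))
      = (L (1,0)).1 * (L (0,1)).2 - (L (0,1)).1 * (L (1,0)).2 := by
    rw [← LinearMap.det_toMatrix (Module.Basis.finTwoProd ℝ), Matrix.det_fin_two]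
    simp [LinearMap.toMatrix_apply, Module.Basis.finTwoProd]
  rw [hdet, hb, ← ha, ← hd]
  -- a = X00(0)^2 ≥ 0
  have hanonneg : 0 ≤ a := by
    have hlim : Filter.Tendsto (fun t : ℝ => (X (t • ((1:ℝ),(0:ℝ))) 0 0) ^ 2)
        (𝓝[≠] (0:ℝ)) (𝓝 ((X 0 0 0) ^ 2)) :=
      (((hXij 0 0).tendsto.comp (hcurve (1,0))).pow 2)
    have heq' : ∀ᶠ t : ℝ in 𝓝[≠] (0:ℝ),
        t⁻¹ * (Φ (t • ((1:ℝ),(0:ℝ)))).1 = (X (t • ((1:ℝ),(0:ℝ))) 0 0) ^ 2 := by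
      filter_upwards [hmem (1,0), self_mem_nhdsWithin] with t hts htne
      have htne' : (t:ℝ) ≠ 0 := by simpa using htne
      rw [E1 _ hts]
      have hsm1 : (t • ((1:ℝ),(0:ℝ))).1 = t := by simp
      have hsm2 : (t • ((1:ℝ),(0:ℝ))).2 = 0 := by simp
      rw [hsm1, hsm2, zero_pow (by omega : ℓ ≠ 0)]
      field_simp
      ring
    have := tendsto_nhds_unique (Filter.Tendsto.congr' heq' (key1 (1,0))) hlim
    rw [ha, this]
    positivity
  nlinarith [hkey, hg0sq, hanonneg]
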